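/- Let X be a set with a fixed total order and let w, u, v be nonempty words over X with w = uv and w a Lyndon word. Then the following are equivalent: (i) v is the minimal, with respect to the alphabetic order, nontrivial right factor (suffix) of w which is a Lyndon word; (ii) v is the longest nontrivial right factor (suffix) of w which is a Lyndon word. -/
import Mathlib


/-- A nonempty word over a totally ordered alphabet is *Lyndon* if it is strictly smaller,
in the alphabetic (lexicographic) order, than each of its nontrivial proper right factors
(i.e. nonempty proper suffixes). -/
def IsLyndon {X : Type*} [LinearOrder X] (w : List X) : Prop :=
  w ≠ [] ∧ ∀ k : ℕ, k < w.length → 0 < k → w < w.drop k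

/-- Let `w = u ++ v` with `u, v` nonempty and `w` Lyndon.  Then `v` is the alphabetically
minimal nontrivial proper Lyndon right factor of `w` if and only if `v` is the longest
nontrivial proper Lyndon right factor of `w`. -/
theorem stmt_0 {X : Type*} [LinearOrder X] (w u v : List X)
    (hw : w = u ++ v) (hu : u ≠ []) (hv : v ≠ []) (hL : IsLyndon w) :
    (IsLyndon v ∧ ∀ k : ℕ, k < w.length → 0 < k → IsLyndon (w.drop k) → v ≤ w.drop k) ↔
      (IsLyndon v ∧ ∀ k : ℕ, k < w.length → 0 < k → IsLyndon (w.drop k) →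
        (w.drop k).length ≤ v.length) := by
  have hlenw : w.length = u.length + v.length := by simp [hw]
  have hvdrop : w.drop u.length = v := by simp [hw]
  have hupos : 0 < u.length := List.length_pos_iff.mpr hu
  have hvpos : 0 < v.length := List.length_pos_iff.mpr hv
  constructor
  · rintro ⟨hvL, hmin⟩
    refine ⟨hvL, fun k hk hk0 hkL => ?_⟩
    by_contra h
    push_neg at h
    rw [List.length_drop] at h
    -- v.length < w.length - k, so k < u.length
    have hku : k < u.length := by omega
    have hveq : (w.drop k).drop (u.length - k) = v := by
      rw [List.drop_drop]
      rw [show k + (u.length - k) = u.length by omega, hvdrop]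
    have hlt : w.drop k < v := by
      have := hkL.2 (u.length - k) (by rw [List.length_drop]; omega) (by omega)
      rwa [hveq] at this
    exact absurd (hmin k hk hk0 hkL) (not_le.mpr hlt)
  · rintro ⟨hvL, hlong⟩
    refine ⟨hvL, fun k hk hk0 hkL => ?_⟩
    have hlen := hlong k hk hk0 hkL
    rw [List.length_drop] at hlen
    rcases eq_or_lt_of_le hlen with heq | hlt
    · have hkeq : k = u.length := by omega
      rw [hkeq, hvdrop]
    · -- w.drop k is a proper suffix of v
      have hku : u.length < k := by omega
      have hveq : v.drop (k - u.length) = w.drop k := by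
        rw [← hvdrop, List.drop_drop]
        congr 1
        omega
      have := hvL.2 (k - u.length) (by omega) (by omega)
      rw [hveq] at this
      exact le_of_lt this
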